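/- The additive shift identity for polynomial potential: for every k ≥ 1, all rationals p₁, …, p_k (setting p_{k+1} := 0), and every natural number n, ∑_{i=1}^{k} C(n+1, i) · pᵢ = p₁ + ∑_{i=1}^{k} C(n, i) · (pᵢ + p_{i+1}), where C(n, i) denotes the binomial coefficient. Hence a list of length n+1 annotated with (p₁, …, p_k) carries exactly p₁ resource for its head plus the potential of a list of length n annotated with the additive shift ◁(p₁, …, p_k) = (p₁+p₂, p₂+p₃, …, p_{k−1}+p_k, p_k). -/

import Mathlib

/-- **Theorem (additive shift identity for polynomial potential).** For every
`k ≥ 1`, all rationals `p₁, …, p_k` (with `p_{k+1} := 0`), and every natural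
number `n`,
`∑_{i=1}^{k} C(n+1, i) · pᵢ = p₁ + ∑_{i=1}^{k} C(n, i) · (pᵢ + p_{i+1})`;
so a list of length `n+1` annotated with `(p₁, …, p_k)` carries exactly `p₁`
resource for its head plus the potential of a list of length `n` annotated with
the additive shift `◁(p₁, …, p_k) = (p₁+p₂, …, p_{k−1}+p_k, p_k)`. -/
theorem additive_shift_identity (k : ℕ) (hk : 1 ≤ k) (p : ℕ → ℚ) (hp : p (k + 1) = 0)
    (n : ℕ) :
    ∑ i ∈ Finset.Icc 1 k, ((n + 1).choose i : ℚ) * p i =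
      p 1 + ∑ i ∈ Finset.Icc 1 k, (n.choose i : ℚ) * (p i + p (i + 1)) := by
  rw [← Finset.Ico_add_one_right_eq_Icc, Finset.sum_Ico_eq_sum_range, Finset.sum_Ico_eq_sum_range]
  simp only [Nat.succ_sub_one, Nat.add_sub_cancel, add_comm 1]
  have key : ∀ j, ((n + 1).choose (j + 1) : ℚ) = n.choose j + n.choose (j + 1) := by
    intro j; rw [Nat.choose_succ_succ]; push_cast; ring
  have h : ∑ j ∈ Finset.range k, ((n.choose j : ℚ)) * p (j + 1)
      = p 1 + ∑ j ∈ Finset.range k, ((n.choose (j + 1) : ℚ)) * p (j + 1 + 1) := by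
    obtain ⟨m, rfl⟩ : ∃ m, k = m + 1 := ⟨k - 1, (Nat.succ_pred_eq_of_pos hk).symm⟩
    rw [Finset.sum_range_succ' (fun j => ((n.choose j : ℚ)) * p (j + 1)),
        Finset.sum_range_succ (fun j => ((n.choose (j + 1) : ℚ)) * p (j + 1 + 1))]
    
    simp [hp]
    ring
  simp only [key, add_mul, mul_add, Finset.sum_add_distrib]
  linarith [h]
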